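/- Let m = 2h + 1 ≥ 5 be odd. For any j ∈ Γ_(h) (that is, j odd with 1 ≤ j ≤ 2^h − 1), the 2-cyclotomic cosets modulo 2^m − 1 satisfy: (i) if j ≠ 1 then j + 2^{h+1} is the coset leader of C_{j+2^{h+1}}, while the coset leader of C_{1+2^{h+1}} is 1 + 2^h; (ii) |C_{j+2^{h+1}}| = m. -/

import Mathlib

/-- The 2-cyclotomic coset of i modulo v:
    C_i = {i·2^s mod v : s = 0, 1, 2, …} ⊆ Z_v. -/
def cosetC (v i : ℕ) : Set ℕ := {x | ∃ s : ℕ, x = i * 2 ^ s % v}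

lemma coset_reduce (m v x s : ℕ) (hv : 2 ^ m % v = 1 % v) :
    x * 2 ^ s % v = x * 2 ^ (s % m) % v := by
  have hmod : (2:ℕ) ^ m ≡ 1 [MOD v] := hv
  have h1 : (2:ℕ) ^ (m * (s / m)) ≡ 1 [MOD v] := by
    rw [pow_mul]
    simpa using hmod.pow (s / m)
  have h2 : x * 2 ^ s = x * 2 ^ (m * (s / m)) * 2 ^ (s % m) := by
    rw [mul_assoc, ← pow_add, Nat.div_add_mod s m]
  rw [h2]
  have := (h1.mul_left x).mul_right (2 ^ (s % m))
  simpa [Nat.ModEq] using this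

lemma period_mul (v x a k : ℕ) (hp : x * 2 ^ a ≡ x [MOD v]) :
    x * 2 ^ (a * k) ≡ x [MOD v] := by
  induction k with
  | zero => simpa using Nat.ModEq.refl x
  | succ n ih =>
    have h : x * 2 ^ (a * (n+1)) = x * 2 ^ (a * n) * 2 ^ a := by
      rw [mul_assoc, ← pow_add, Nat.mul_succ]
    rw [h]
    calc x * 2 ^ (a*n) * 2 ^ a ≡ x * 2 ^ a [MOD v] := ih.mul_right _
      _ ≡ x [MOD v] := hp

lemma period_gcd (v x : ℕ) : ∀ a b : ℕ, x * 2 ^ a ≡ x [MOD v] → x * 2 ^ b ≡ x [MOD v] →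
    x * 2 ^ Nat.gcd a b ≡ x [MOD v] := by
  intro a b
  induction a, b using Nat.gcd.induction with
  | H0 n => intro _ h; simpa using h
  | H1 a b hpos ih =>
    intro ha hb
    rw [Nat.gcd_rec]
    refine ih ?_ ha
    have h1 := period_mul v x a (b / a) ha
    have h2 : x * 2 ^ (a * (b / a)) * 2 ^ (b % a) ≡ x * 2 ^ (b % a) [MOD v] := h1.mul_right _
    have h3 : x * 2 ^ (a * (b / a)) * 2 ^ (b % a) = x * 2 ^ b := by
      rw [mul_assoc, ← pow_add, Nat.div_add_mod]
    rw [h3] at h2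
    exact h2.symm.trans hb

lemma aux1 (h j s : ℕ) (hh : 2 ≤ h) (hj2 : j ≤ 2 ^ h - 1) (hs : s < h) :
    (j + 2 ^ (h + 1)) * 2 ^ s % (2 ^ (2 * h + 1) - 1) = (j + 2 ^ (h + 1)) * 2 ^ s := by
  apply Nat.mod_eq_of_lt
  have hA : (2:ℕ) ≤ 2 ^ (h-1) := by
    calc (2:ℕ) = 2^1 := by norm_num
    _ ≤ 2^(h-1) := Nat.pow_le_pow_right (by norm_num) (by omega)
  have e1 : (2:ℕ) ^ h = 2 * 2^(h-1) := by
    rw [← pow_succ']; congr 1; omega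
  have e2 : (2:ℕ) ^ (h+1) = 4 * 2^(h-1) := by
    rw [show h+1 = (h-1)+2 by omega, pow_add]; ring
  have e3 : (2:ℕ) ^ (2*h+1) = 8 * (2^(h-1) * 2^(h-1)) := by
    rw [show 2*h+1 = (h-1)+((h-1)+3) by omega, pow_add, pow_add]; ring
  have hs' : (2:ℕ)^s ≤ 2^(h-1) := Nat.pow_le_pow_right (by norm_num) (by omega)
  have hb : (j + 2^(h+1)) * 2^s ≤ (6 * 2^(h-1) - 1) * 2^(h-1) :=
    Nat.mul_le_mul (by omega) hs'
  have hexp : (6 * 2^(h-1) - 1) * 2^(h-1) = 6 * (2^(h-1) * 2^(h-1)) - 2^(h-1) := by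
    rw [Nat.sub_mul]; ring_nf
  have hAA : 2 * 2^(h-1) ≤ 2^(h-1) * 2^(h-1) := Nat.mul_le_mul_right _ hA
  omega

lemma aux2 (h j : ℕ) (hh : 2 ≤ h) (hj2 : j ≤ 2 ^ h - 1) :
    (j + 2 ^ (h + 1)) * 2 ^ h % (2 ^ (2 * h + 1) - 1) = j * 2 ^ h + 1 := by
  have hX : (4:ℕ) ≤ 2 ^ h := by
    calc (4:ℕ) = 2^2 := by norm_num
    _ ≤ 2^h := Nat.pow_le_pow_right (by norm_num) hh
  have e1 : (2:ℕ)^(h+1) * 2^h = 2^(2*h+1) := by rw [← pow_add]; congr 1; omega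
  have e2 : (2:ℕ)^(2*h+1) = 2 * (2^h * 2^h) := by
    rw [show 2*h+1 = h+(h+1) by omega, pow_add, pow_succ]; ring
  have hd : 2^h ≤ 2^h * 2^h := Nat.le_mul_of_pos_right _ (by positivity)
  have hnum : (j + 2^(h+1)) * 2^h = j * 2^h + 1 + (2^(2*h+1) - 1) := by
    rw [add_mul, e1]; omega
  rw [hnum, Nat.add_mod_right]
  apply Nat.mod_eq_of_lt
  have hjX : j * 2^h ≤ (2^h - 1) * 2^h := Nat.mul_le_mul_right _ hj2
  have hes : (2^h - 1) * 2^h = 2^h * 2^h - 2^h := by rw [Nat.sub_mul]; ring_nf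
  omega

lemma aux3 (h t j : ℕ) (hh : 2 ≤ h) (ht1 : 1 ≤ t) (ht2 : t ≤ h) (hj2 : j ≤ 2 ^ h - 1) :
    (j + 2 ^ (h + 1)) * 2 ^ (h + t) % (2 ^ (2 * h + 1) - 1)
      = j / 2 ^ (h + 1 - t) + (j % 2 ^ (h + 1 - t)) * 2 ^ (h + t) + 2 ^ t := by
  set R := 2 ^ (h + 1 - t) with hR
  set Q := 2 ^ (h + t) with hQ
  set a := j / R with ha
  set b := j % R with hb
  have hRpos : 0 < R := by positivity
  have hQpos : 0 < Q := by positivity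
  have hRQ : R * Q = 2 ^ (2*h+1) := by rw [hR, hQ, ← pow_add]; congr 1; omega
  have hab : R * a + b = j := Nat.div_add_mod j R
  have hbR : b < R := Nat.mod_lt _ hRpos
  have haP : a < 2 ^ (t-1) := by
    have h1 : (2:ℕ)^(t-1) * R = 2^h := by rw [hR, ← pow_add]; congr 1; omega
    by_contra hc
    push_neg at hc
    have h2 := Nat.mul_le_mul_left R hc
    have h3 : (0:ℕ) < 2^h := by positivity
    have h4 : R * 2^(t-1) = 2^(t-1) * R := mul_comm _ _
    omega
  have e1 : (2:ℕ)^(h+1) * Q = 2^t * (R * Q) := by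
    rw [hRQ, hQ, ← pow_add, ← pow_add]; congr 1; omega
  have hnum : (j + 2^(h+1)) * Q = (a + 2^t) * (R * Q) + b * Q := by
    conv_lhs => rw [← hab]
    rw [add_mul, add_mul, e1]
    ring
  have hV1 : 0 < R * Q := Nat.mul_pos hRpos hQpos
  have hsplit : (a + 2^t) * (R * Q) + b * Q
      = (a + b * Q + 2^t) + (a + 2^t) * (R * Q - 1) := by
    obtain ⟨c, hc⟩ : ∃ c, R * Q = c + 1 := ⟨R*Q - 1, by omega⟩
    rw [hc]
    simp only [Nat.add_sub_cancel]
    ring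
  have hbQ : b * Q ≤ (R - 1) * Q := Nat.mul_le_mul_right _ (by omega)
  have hRQ' : (R - 1) * Q = R * Q - Q := by rw [Nat.sub_mul, one_mul]
  have hQle : Q ≤ R * Q := Nat.le_mul_of_pos_left Q hRpos
  have h2t : (2:ℕ)^(t-1) * 2 = 2^t := by rw [← pow_succ]; congr 1; omega
  have h4P : (2:ℕ)^(t-1) * 4 ≤ Q := by
    calc (2:ℕ)^(t-1) * 4 = 2^(t+1) := by rw [show t+1 = (t-1)+2 by omega, pow_add]; ring
    _ ≤ Q := Nat.pow_le_pow_right (by norm_num) (by omega)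
  have hlt : a + b * Q + 2^t < R * Q - 1 := by omega
  rw [hnum, hsplit, hRQ]
  rw [Nat.add_mul_mod_self_right]
  rw [← hRQ]
  exact Nat.mod_eq_of_lt hlt

lemma vmod (h : ℕ) (hh : 2 ≤ h) : (2:ℕ) ^ (2*h+1) % (2 ^ (2*h+1) - 1) = 1 % (2 ^ (2*h+1) - 1) := by
  have h1 : (1:ℕ) ≤ 2 ^ (2*h+1) := Nat.one_le_two_pow
  calc (2:ℕ) ^ (2*h+1) % (2 ^ (2*h+1) - 1)
      = ((2 ^ (2*h+1) - 1) + 1) % (2 ^ (2*h+1) - 1) := by congr 1; omega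
    _ = 1 % (2 ^ (2*h+1) - 1) := Nat.add_mod_left _ _

lemma aux_lb (h j s : ℕ) (hh : 2 ≤ h) (hjodd : Odd j) (hj1 : 1 ≤ j) (hj2 : j ≤ 2 ^ h - 1) :
    j + 2 ^ (h + 1) ≤ (j + 2 ^ (h + 1)) * 2 ^ s % (2 ^ (2 * h + 1) - 1)
    ∨ (j + 2 ^ (h + 1)) * 2 ^ s % (2 ^ (2 * h + 1) - 1) = j * 2 ^ h + 1 := by
  rw [coset_reduce (2*h+1) _ _ s (vmod h hh)]
  set s' := s % (2*h+1) with hs'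
  have hs'm : s' < 2*h+1 := Nat.mod_lt _ (by positivity)
  rcases lt_trichotomy s' h with hlt | heq | hgt
  · left
    rw [aux1 h j s' hh hj2 hlt]
    exact Nat.le_mul_of_pos_right _ (by positivity)
  · right; rw [heq]; exact aux2 h j hh hj2
  · left
    set t := s' - h with ht
    have ht1 : 1 ≤ t := by omega
    have ht2 : t ≤ h := by omega
    have hseq : s' = h + t := by omega
    rw [hseq, aux3 h t j hh ht1 ht2 hj2]
    obtain ⟨c, hc⟩ := hjodd
    rcases eq_or_lt_of_le ht1 with h1t | h2t
    · -- t = 1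
      rw [← h1t]
      have e0 : h + 1 - 1 = h := by omega
      rw [e0]
      have hjlt : j < 2^h := by
        have : (1:ℕ) ≤ 2^h := Nat.one_le_two_pow
        omega
      rw [Nat.div_eq_of_lt hjlt, Nat.mod_eq_of_lt hjlt]
      have e2 : j * 2^(h+1) = 2*(c * 2^(h+1)) + 2^(h+1) := by rw [hc]; ring
      have e3 : c ≤ c * 2^(h+1) := Nat.le_mul_of_pos_right _ (by positivity)
      omega
    · -- 2 ≤ t
      have hQ4 : 2^h * 4 ≤ 2^(h+t) := by
        calc (2:ℕ)^h * 4 = 2^(h+2) := by rw [pow_add]; ring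
        _ ≤ 2^(h+t) := Nat.pow_le_pow_right (by norm_num) (by omega)
      have hb1 : 1 ≤ j % 2^(h+1-t) := by
        have hre : (2:ℕ)^(h+1-t) = 2 * 2^(h-t) := by
          rw [← pow_succ']; congr 1; omega
        have hdm := Nat.div_add_mod j (2^(h+1-t))
        have e4 : (2:ℕ)^(h+1-t) * (j / 2^(h+1-t)) = 2 * (2^(h-t) * (j / 2^(h+1-t))) := by
          rw [hre]; ring
        omega
      have hbQ : 2^(h+t) ≤ (j % 2^(h+1-t)) * 2^(h+t) :=
        Nat.le_mul_of_pos_left _ hb1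
      have e5 : (2:ℕ)^(h+1) = 2^h * 2 := by rw [pow_succ]
      generalize j % 2 ^ (h + 1 - t) * 2 ^ (h + t) = K at hbQ ⊢
      generalize j / 2 ^ (h + 1 - t) = D
      generalize j % 2 ^ (h + 1 - t) = B at hb1
      generalize (2:ℕ) ^ (h+t) = E at hQ4 hbQ
      generalize (2:ℕ) ^ (h+1) = Z at e5 ⊢
      generalize (2:ℕ) ^ h = F at hj2 hQ4 e5
      generalize (2:ℕ) ^ t = T
      omega

theorem stmt11 (m h : ℕ) (hm : m = 2 * h + 1) (hm5 : 5 ≤ m)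
    (j : ℕ) (hjodd : Odd j) (hj1 : 1 ≤ j) (hj2 : j ≤ 2 ^ h - 1) :
    (j ≠ 1 → IsLeast (cosetC (2 ^ m - 1) (j + 2 ^ (h + 1))) (j + 2 ^ (h + 1))) ∧
    IsLeast (cosetC (2 ^ m - 1) (1 + 2 ^ (h + 1))) (1 + 2 ^ h) ∧
    (cosetC (2 ^ m - 1) (j + 2 ^ (h + 1))).ncard = m := by
  have hh : 2 ≤ h := by omega
  subst hm
  set v := 2 ^ (2*h+1) - 1 with hv
  have hX4 : (4:ℕ) ≤ 2 ^ h := by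
    calc (4:ℕ) = 2^2 := by norm_num
    _ ≤ 2^h := Nat.pow_le_pow_right (by norm_num) hh
  have e2 : (2:ℕ)^(2*h+1) = 2 * (2^h * 2^h) := by
    rw [show 2*h+1 = h+(h+1) by omega, pow_add, pow_succ]; ring
  have e1 : (2:ℕ)^(h+1) = 2 * 2^h := by rw [pow_succ]; ring
  have hXX : 4 * 2^h ≤ 2^h * 2^h := Nat.mul_le_mul_right _ hX4
  have hxlt : j + 2^(h+1) < v := by omega
  refine ⟨?_, ?_, ?_⟩
  · -- (i) j ≠ 1 case
    intro hne
    have hj3 : 3 ≤ j := by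
      obtain ⟨c, hc⟩ := hjodd; omega
    constructor
    · exact ⟨0, by rw [pow_zero, mul_one, Nat.mod_eq_of_lt hxlt]⟩
    · rintro y ⟨s, rfl⟩
      rcases aux_lb h j s hh hjodd hj1 hj2 with hle | heq
      · exact hle
      · rw [heq]
        have : 3 * 2^h ≤ j * 2^h := Nat.mul_le_mul_right _ hj3
        omega
  · -- leader of C_{1+2^{h+1}} is 1+2^h
    have h12 : (1:ℕ) ≤ 2^h - 1 := by omega
    constructor
    · exact ⟨h, by rw [aux2 h 1 hh h12]; ring⟩
    · rintro y ⟨s, rfl⟩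
      rcases aux_lb h 1 s hh odd_one le_rfl h12 with hle | heq
      · rw [← hv] at hle; omega
      · rw [← hv] at heq; omega
  · -- ncard = m
    set x := j + 2^(h+1) with hx
    have hvmod := vmod h hh
    have key : ∀ s1 s2 : ℕ, s1 < s2 → s2 < 2*h+1 →
        x * 2^s1 % v ≠ x * 2^s2 % v := by
      intro s1 s2 h12 h2m heq
      have hmeq : x * 2^s1 ≡ x * 2^s2 [MOD v] := heq
      have hxm : x * 2^(2*h+1) ≡ x [MOD v] := by
        have := (show ((2:ℕ)^(2*h+1)) ≡ 1 [MOD v] from hvmod).mul_left x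
        simpa using this
      have hper : x * 2^(s1 + (2*h+1 - s2)) ≡ x [MOD v] := by
        have h2 := hmeq.mul_right (2^(2*h+1 - s2))
        rw [mul_assoc, mul_assoc, ← pow_add, ← pow_add] at h2
        rw [show s2 + (2*h+1 - s2) = 2*h+1 by omega] at h2
        exact h2.trans hxm
      set d := s1 + (2*h+1 - s2) with hd
      have hd0 : 0 < d := by omega
      have hdm : d < 2*h+1 := by omega
      have hg := period_gcd v x d (2*h+1) hper hxm
      set g := Nat.gcd d (2*h+1) with hgdef
      have hg0 : 0 < g := Nat.gcd_pos_of_pos_left _ hd0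
      have hgd : g ≤ d := Nat.gcd_le_left _ hd0
      obtain ⟨k, hk⟩ : g ∣ 2*h+1 := Nat.gcd_dvd_right _ _
      have hk3 : 3 ≤ k := by
        rcases Nat.even_or_odd k with ⟨c, hc⟩ | hodd
        · exfalso
          subst hc
          have he : g * (c + c) = 2 * (g * c) := by ring
          omega
        · obtain ⟨c, hc⟩ := hodd
          have hk0 : k ≠ 0 := by rintro rfl; omega
          have hk1 : k ≠ 1 := by rintro rfl; omega
          omega
      have h3g : 3 * g ≤ 2*h+1 := by
        have := Nat.mul_le_mul_left g hk3
        have e : g * 3 = 3 * g := by ring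
        omega
      have hgh : g ≤ h - 1 := by omega
      -- contradiction via divisibility
      have hxle : x ≤ x * 2^g := Nat.le_mul_of_pos_right _ (by positivity)
      have hdvd : v ∣ x * 2^g - x := (Nat.modEq_iff_dvd' hxle).mp hg.symm
      have hx2 : x * 2 ≤ x * 2^g := by
        apply Nat.mul_le_mul_left
        calc (2:ℕ) = 2^1 := by norm_num
        _ ≤ 2^g := Nat.pow_le_pow_right (by norm_num) hg0
      have hpos : 0 < x * 2^g - x := by omega
      have hlev := Nat.le_of_dvd hpos hdvd
      -- bound x * 2^g
      have hA2 : (2:ℕ) ≤ 2^(h-1) := by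
        calc (2:ℕ) = 2^1 := by norm_num
        _ ≤ 2^(h-1) := Nat.pow_le_pow_right (by norm_num) (by omega)
      have hga : (2:ℕ)^g ≤ 2^(h-1) := Nat.pow_le_pow_right (by norm_num) (by omega)
      have ea : (2:ℕ)^h = 2 * 2^(h-1) := by rw [← pow_succ']; congr 1; omega
      have eb : (2:ℕ)^(h+1) = 4 * 2^(h-1) := by
        rw [show h+1 = (h-1)+2 by omega, pow_add]; ring
      have ec : (2:ℕ)^(2*h+1) = 8 * (2^(h-1) * 2^(h-1)) := by
        rw [show 2*h+1 = (h-1)+((h-1)+3) by omega, pow_add, pow_add]; ring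
      have hbnd : x * 2^g ≤ (6 * 2^(h-1) - 1) * 2^(h-1) :=
        Nat.mul_le_mul (by omega) hga
      have hexp : (6 * 2^(h-1) - 1) * 2^(h-1) = 6 * (2^(h-1) * 2^(h-1)) - 2^(h-1) := by
        rw [Nat.sub_mul]; ring_nf
      have hAA : 2 * 2^(h-1) ≤ 2^(h-1) * 2^(h-1) := Nat.mul_le_mul_right _ hA2
      omega
    have himg : cosetC v x = ↑((Finset.range (2*h+1)).image fun s => x * 2^s % v) := by
      ext y
      simp only [cosetC, Set.mem_setOf_eq, Finset.coe_image, Set.mem_image, Finset.mem_coe,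
        Finset.mem_range]
      constructor
      · rintro ⟨s, rfl⟩
        exact ⟨s % (2*h+1), Nat.mod_lt _ (by omega), (coset_reduce (2*h+1) v x s hvmod).symm⟩
      · rintro ⟨s, _, rfl⟩; exact ⟨s, rfl⟩
    rw [himg, Set.ncard_coe_finset]
    rw [Finset.card_image_of_injOn, Finset.card_range]
    intro s1 hs1 s2 hs2 heq
    simp only [Finset.mem_coe, Finset.mem_range] at hs1 hs2
    rcases lt_trichotomy s1 s2 with hlt | heqq | hgt
    · exact absurd heq (key s1 s2 hlt hs2)
    · exact heqq
    · exact absurd heq.symm (key s2 s1 hgt hs1)
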